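/- Let r₀ > 0 and define r(t) = r₀ exp(−[erf^{-1}(√(2/π) t/r₀)]²) for t in an interval around 0 where erf^{-1} is defined. Then r solves the ODE r̈ = −1/r with r(0) = r₀ and ṙ(0) = 0; equivalently, t satisfies t = √(π/2) r₀ erf(√(ln(r₀/r(t)))). -/

import Mathlib

open scoped RealInnerProductSpace
open Set

noncomputable section

abbrev E2 := EuclideanSpace ℝ (Fin 2)

/-- Clockwise rotation through π/2. -/
def rot (v : E2) : E2 := (WithLp.equiv 2 (Fin 2 → ℝ)).symm ![v 1, -v 0]

/-- The Gauss error function `erf(z) = (2/√π) ∫₀^z e^{−u²} du`. -/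
def erf (z : ℝ) : ℝ := (2 / Real.sqrt Real.pi) * ∫ u in (0:ℝ)..z, Real.exp (-u ^ 2)

lemma erf_zero' : erf 0 = 0 := by simp [erf]

lemma erf_pos' {x : ℝ} (hx : 0 < x) : 0 < erf x := by
  apply mul_pos (by positivity)
  exact intervalIntegral.intervalIntegral_pos_of_pos
    ((Real.continuous_exp.comp (by continuity)).intervalIntegrable 0 x)
    (fun u => Real.exp_pos _) hx

lemma hasDerivAt_erf' (x : ℝ) :
    HasDerivAt erf (2 / Real.sqrt Real.pi * Real.exp (-x ^ 2)) x := by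
  have hc : Continuous fun u : ℝ => Real.exp (-u ^ 2) :=
    Real.continuous_exp.comp (by continuity)
  have h := intervalIntegral.integral_hasDerivAt_right
    (hc.intervalIntegrable 0 x)
    (hc.stronglyMeasurableAtFilter _ _)
    hc.continuousAt
  exact h.const_mul (2 / Real.sqrt Real.pi)

lemma aux2' : Real.sqrt (Real.pi/2) * (2 / Real.sqrt Real.pi) = Real.sqrt 2 := by
  have hπ : Real.sqrt Real.pi ≠ 0 := by positivity
  rw [Real.sqrt_div Real.pi_pos.le]
  rw [show Real.sqrt Real.pi / Real.sqrt 2 * (2 / Real.sqrt Real.pi)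
      = 2 / Real.sqrt 2 by
        field_simp]
  exact Real.div_sqrt

lemma sqrt_pi_div_two_mul' : Real.sqrt (Real.pi / 2) * Real.sqrt (2 / Real.pi) = 1 := by
  rw [← Real.sqrt_mul (by positivity), show Real.pi / 2 * (2 / Real.pi) = 1 by field_simp]
  exact Real.sqrt_one

/-- `r(t) = r₀ exp(−[erf⁻¹(√(2/π) t/r₀)]²)` solves `r̈ = −1/r` with
`r(0) = r₀`, `ṙ(0) = 0`; equivalently `t = √(π/2) r₀ erf(√(ln(r₀/r(t))))`. -/
theorem shrinking_circle_solution
    (T r₀ : ℝ) (hT : 0 < T) (hr₀ : 0 < r₀)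
    (erfinv : ℝ → ℝ)
    (herfinv : ∀ s ∈ Ico (0:ℝ) 1, erf (erfinv s) = s ∧ 0 ≤ erfinv s)
    (r r' r'' : ℝ → ℝ)
    (hdom : ∀ t ∈ Ico (0:ℝ) T, Real.sqrt (2 / Real.pi) * t / r₀ ∈ Ico (0:ℝ) 1)
    (hrdef : ∀ t ∈ Ico (0:ℝ) T,
      r t = r₀ * Real.exp (-(erfinv (Real.sqrt (2 / Real.pi) * t / r₀)) ^ 2))
    (hr' : ∀ t ∈ Ico (0:ℝ) T, HasDerivAt r (r' t) t)
    (hr'' : ∀ t ∈ Ico (0:ℝ) T, HasDerivAt r' (r'' t) t) :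
    (∀ t ∈ Ico (0:ℝ) T, r'' t = -1 / r t) ∧
    r 0 = r₀ ∧ r' 0 = 0 ∧
    (∀ t ∈ Ico (0:ℝ) T,
      t = Real.sqrt (Real.pi / 2) * r₀ * erf (Real.sqrt (Real.log (r₀ / r t)))) := by
  have hcpos : 0 < Real.sqrt (2 / Real.pi) := Real.sqrt_pos.mpr (by positivity)
  have ht0 : (0:ℝ) ∈ Ico (0:ℝ) T := ⟨le_refl _, hT⟩
  -- erfinv 0 = 0
  have hinv0 : erfinv 0 = 0 := by
    obtain ⟨he, hge⟩ := herfinv 0 ⟨le_refl _, by norm_num⟩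
    rcases hge.lt_or_eq with h | h
    · exact absurd he (by simpa using (erf_pos' h).ne')
    · exact h.symm
  -- r 0 = r₀
  have hr0 : r 0 = r₀ := by
    rw [hrdef 0 ht0]
    simp [hinv0]
  -- r is positive on [0, T)
  have hrpos : ∀ t ∈ Ico (0:ℝ) T, 0 < r t := by
    intro t ht; rw [hrdef t ht]; positivity
  -- log (r₀ / r t) = (erfinv s)^2
  have hL : ∀ t ∈ Ico (0:ℝ) T,
      Real.log (r₀ / r t) = (erfinv (Real.sqrt (2 / Real.pi) * t / r₀)) ^ 2 := by
    intro t ht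
    rw [hrdef t ht, Real.exp_neg, div_mul_eq_div_div, div_self hr₀.ne', one_div, inv_inv,
      Real.log_exp]
  -- erfinv s > 0 for t ∈ (0, T)
  have hx : ∀ t ∈ Ioo (0:ℝ) T, 0 < erfinv (Real.sqrt (2 / Real.pi) * t / r₀) := by
    intro t ht
    have hs : 0 < Real.sqrt (2 / Real.pi) * t / r₀ := div_pos (mul_pos hcpos ht.1) hr₀
    obtain ⟨he, hge⟩ := herfinv _ (hdom t ⟨ht.1.le, ht.2⟩)
    rcases hge.lt_or_eq with h | h
    · exact h
    · rw [← h, erf_zero'] at he; linarith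
  -- Part (iv)
  have part4 : ∀ t ∈ Ico (0:ℝ) T,
      t = Real.sqrt (Real.pi / 2) * r₀ * erf (Real.sqrt (Real.log (r₀ / r t))) := by
    intro t ht
    obtain ⟨he, hge⟩ := herfinv _ (hdom t ht)
    rw [hL t ht, Real.sqrt_sq hge, he,
      show Real.sqrt (Real.pi/2) * r₀ * (Real.sqrt (2 / Real.pi) * t / r₀)
        = (Real.sqrt (Real.pi/2) * Real.sqrt (2 / Real.pi)) * t by field_simp,
      sqrt_pi_div_two_mul', one_mul]
  -- the velocity formula on (0, T)
  have hr'formula : ∀ t ∈ Ioo (0:ℝ) T,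
      r' t = -(Real.sqrt 2 * Real.sqrt (Real.log (r₀ / r t))) := by
    intro t ht
    have ht' : t ∈ Ico (0:ℝ) T := ⟨ht.1.le, ht.2⟩
    have hrt : 0 < r t := hrpos t ht'
    have hLx := hL t ht'
    have hLpos : 0 < Real.log (r₀ / r t) := by
      rw [hLx]; exact pow_pos (hx t ht) 2
    set L := Real.log (r₀ / r t) with hLdef
    have hrcont : ContinuousAt r t := (hr' t ht').continuousAt
    have ev_pos : ∀ᶠ u in nhds t, 0 < r u := continuousAt_const.eventually_lt hrcont hrt
    -- derivative of inner log
    have h1 : HasDerivAt (fun u => Real.log (r u)) ((r t)⁻¹ * r' t) t :=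
      (Real.hasDerivAt_log hrt.ne').comp t (hr' t ht')
    have hlog : HasDerivAt (fun u => Real.log (r₀ / r u)) (-((r t)⁻¹ * r' t)) t := by
      refine (h1.const_sub (Real.log r₀)).congr_of_eventuallyEq ?_
      filter_upwards [ev_pos] with u hu
      exact Real.log_div hr₀.ne' hu.ne'
    have hsq : HasDerivAt Real.sqrt (1 / (2 * Real.sqrt L)) L :=
      Real.hasDerivAt_sqrt hLpos.ne'
    have hcomp1 : HasDerivAt (fun u => Real.sqrt (Real.log (r₀ / r u)))
        (1 / (2 * Real.sqrt L) * -((r t)⁻¹ * r' t)) t := hsq.comp t hlog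
    have herfd := hasDerivAt_erf' (Real.sqrt L)
    have hcomp2 : HasDerivAt (fun u => erf (Real.sqrt (Real.log (r₀ / r u))))
        (2 / Real.sqrt Real.pi * Real.exp (-Real.sqrt L ^ 2) *
          (1 / (2 * Real.sqrt L) * -((r t)⁻¹ * r' t))) t :=
        HasDerivAt.comp (h₂ := erf) (h := fun u => Real.sqrt (Real.log (r₀ / r u))) t herfd hcomp1
    have hfull := hcomp2.const_mul (Real.sqrt (Real.pi / 2) * r₀)
    have hid : (fun u => Real.sqrt (Real.pi / 2) * r₀ *
        erf (Real.sqrt (Real.log (r₀ / r u)))) =ᶠ[nhds t] id := by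
      filter_upwards [Ioo_mem_nhds ht.1 ht.2] with u hu
      exact (part4 u ⟨hu.1.le, hu.2⟩).symm
    have hone : HasDerivAt (fun u => Real.sqrt (Real.pi / 2) * r₀ *
        erf (Real.sqrt (Real.log (r₀ / r u)))) 1 t :=
      (hasDerivAt_id t).congr_of_eventuallyEq hid
    have heq := hfull.unique hone
    -- simplify heq
    rw [Real.sq_sqrt hLpos.le] at heq
    have hexp : Real.exp (-L) = r t / r₀ := by
      rw [hLdef, ← Real.log_inv, Real.exp_log (by positivity), inv_div]
    rw [hexp] at heq
    have hsL : 0 < Real.sqrt L := Real.sqrt_pos.mpr hLpos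
    have h2 : Real.sqrt 2 * Real.sqrt 2 = 2 := Real.mul_self_sqrt (by norm_num)
    have haux := aux2'
    -- heq : √(π/2) * r₀ * (2/√π * (r t / r₀) * (1/(2*√L) * -((r t)⁻¹ * r' t))) = 1
    have hkey : -(r' t) = Real.sqrt 2 * Real.sqrt L := by
      have h := heq
      field_simp at h
      have hne : (Real.sqrt Real.pi * r₀ * (2 * r t)) ≠ 0 := by positivity
      apply mul_left_cancel₀ hne
      have hf : Real.sqrt (Real.pi / 2) * Real.sqrt 2 = Real.sqrt Real.pi := by
        rw [← Real.sqrt_mul (by positivity)]; congr 1; ring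
      linear_combination (r₀ * 2 * r t * Real.sqrt 2) * h + (r₀ * 2 * r t * r' t) * hf
    linarith [hkey]
  -- the ODE on (0, T)
  have part1o : ∀ t ∈ Ioo (0:ℝ) T, r'' t = -1 / r t := by
    intro t ht
    have ht' : t ∈ Ico (0:ℝ) T := ⟨ht.1.le, ht.2⟩
    have hrt : 0 < r t := hrpos t ht'
    have hLpos : 0 < Real.log (r₀ / r t) := by
      rw [hL t ht']; exact pow_pos (hx t ht) 2
    have hr'ne : r' t ≠ 0 := by
      rw [hr'formula t ht]
      have : 0 < Real.sqrt 2 * Real.sqrt (Real.log (r₀ / r t)) :=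
        mul_pos (Real.sqrt_pos.mpr (by norm_num)) (Real.sqrt_pos.mpr hLpos)
      linarith
    have hrcont : ContinuousAt r t := (hr' t ht').continuousAt
    have ev_pos : ∀ᶠ u in nhds t, 0 < r u := continuousAt_const.eventually_lt hrcont hrt
    have h1 : HasDerivAt (fun u => Real.log (r u)) ((r t)⁻¹ * r' t) t :=
      (Real.hasDerivAt_log hrt.ne').comp t (hr' t ht')
    have hlog : HasDerivAt (fun u => Real.log (r₀ / r u)) (-((r t)⁻¹ * r' t)) t := by
      refine (h1.const_sub (Real.log r₀)).congr_of_eventuallyEq ?_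
      filter_upwards [ev_pos] with u hu
      exact Real.log_div hr₀.ne' hu.ne'
    have hG : HasDerivAt (fun u => 2 * Real.log (r₀ / r u)) (2 * -((r t)⁻¹ * r' t)) t :=
      hlog.const_mul 2
    have hF : HasDerivAt (fun u => (r' u) ^ 2) (2 * r' t ^ 1 * r'' t) t :=
      (hr'' t ht').pow 2
    have hFG : (fun u => (r' u) ^ 2) =ᶠ[nhds t] (fun u => 2 * Real.log (r₀ / r u)) := by
      filter_upwards [Ioo_mem_nhds ht.1 ht.2] with u hu
      have hu' : u ∈ Ico (0:ℝ) T := ⟨hu.1.le, hu.2⟩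
      have hLu : 0 ≤ Real.log (r₀ / r u) := by rw [hL u hu']; positivity
      rw [hr'formula u hu]
      rw [neg_pow, mul_pow, Real.sq_sqrt (by norm_num : (0:ℝ) ≤ 2), Real.sq_sqrt hLu]
      ring
    have hF' : HasDerivAt (fun u => (r' u) ^ 2) (2 * -((r t)⁻¹ * r' t)) t :=
      hG.congr_of_eventuallyEq hFG
    have heq2 := hF.unique hF'
    have hcan : (2 * r' t) * r'' t = (2 * r' t) * (-(r t)⁻¹) := by
      rw [pow_one] at heq2; linear_combination heq2
    have := mul_left_cancel₀ (mul_ne_zero two_ne_zero hr'ne) hcan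
    rw [this, neg_div, one_div]
  -- r' 0 = 0
  have hne : (nhdsWithin (0:ℝ) (Ioo (0:ℝ) T)).NeBot := by
    rw [nhdsWithin_Ioo_eq_nhdsGT hT]; infer_instance
  have hrc0 : ContinuousAt r 0 := (hr' 0 ht0).continuousAt
  have hr'0 : r' 0 = 0 := by
    have hr'cont : ContinuousAt r' 0 := (hr'' 0 ht0).continuousAt
    have lim1 : Filter.Tendsto r' (nhdsWithin 0 (Ioo (0:ℝ) T)) (nhds (r' 0)) :=
      hr'cont.tendsto.mono_left nhdsWithin_le_nhds
    have lim2 : Filter.Tendsto r' (nhdsWithin 0 (Ioo (0:ℝ) T)) (nhds 0) := by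
      have hlogc : ContinuousAt (fun u => Real.log (r₀ / r u)) 0 := by
        apply ContinuousAt.log
        · exact continuousAt_const.div hrc0 (by rw [hr0]; exact hr₀.ne')
        · rw [hr0, div_self hr₀.ne']; norm_num
      have hval : Real.log (r₀ / r 0) = 0 := by rw [hr0, div_self hr₀.ne', Real.log_one]
      have h3 : Filter.Tendsto (fun u => -(Real.sqrt 2 * Real.sqrt (Real.log (r₀ / r u))))
          (nhds 0) (nhds 0) := by
        have hc : ContinuousAt (fun u => -(Real.sqrt 2 * Real.sqrt (Real.log (r₀ / r u)))) 0 :=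
          ((Real.continuous_sqrt.continuousAt.comp hlogc).const_mul _).neg
        have : (fun u => -(Real.sqrt 2 * Real.sqrt (Real.log (r₀ / r u)))) 0 = 0 := by
          simp [hval]
        simpa [this] using hc.tendsto
      refine Filter.Tendsto.congr' ?_ (h3.mono_left nhdsWithin_le_nhds)
      filter_upwards [self_mem_nhdsWithin] with u hu
      exact (hr'formula u hu).symm
    exact tendsto_nhds_unique lim1 lim2
  -- r'' 0 = -1 / r 0
  have hr''0 : r'' 0 = -1 / r 0 := by
    have slope_lim : Filter.Tendsto (slope r' 0) (nhdsWithin 0 (Ioi (0:ℝ))) (nhds (r'' 0)) :=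
      (hasDerivAt_iff_tendsto_slope.mp (hr'' 0 ht0)).mono_left
        (nhdsWithin_mono _ fun x hx => ne_of_gt hx)
    have g_cont : ContinuousAt (fun x => -1 / r x) 0 :=
      continuousAt_const.div hrc0 (by rw [hr0]; exact hr₀.ne')
    have lim2 : Filter.Tendsto (slope r' 0) (nhdsWithin 0 (Ioi (0:ℝ))) (nhds (-1 / r 0)) := by
      rw [Metric.tendsto_nhdsWithin_nhds]
      intro ε hε
      obtain ⟨δ₁, hδ₁, hδ₁'⟩ := Metric.continuousAt_iff.mp g_cont ε hε
      refine ⟨min δ₁ T, lt_min hδ₁ hT, fun x hxI hxd => ?_⟩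
      have hx0 : 0 < x := hxI
      have hxT : x < T := by
        have := hxd; rw [Real.dist_eq, sub_zero, abs_of_pos hx0] at this
        exact lt_of_lt_of_le this (min_le_right _ _)
      have hxδ : x < δ₁ := by
        have := hxd; rw [Real.dist_eq, sub_zero, abs_of_pos hx0] at this
        exact lt_of_lt_of_le this (min_le_left _ _)
      have hcont' : ContinuousOn r' (Icc 0 x) := by
        intro y hy
        exact ((hr'' y ⟨hy.1, lt_of_le_of_lt hy.2 hxT⟩).continuousAt).continuousWithinAt
      have hderiv' : ∀ y ∈ Ioo 0 x, HasDerivAt r' (r'' y) y := fun y hy =>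
        hr'' y ⟨hy.1.le, lt_trans hy.2 hxT⟩
      obtain ⟨ξ, hξ, hξeq⟩ := exists_hasDerivAt_eq_slope r' r'' hx0 hcont' hderiv'
      have hξmem : ξ ∈ Ioo (0:ℝ) T := ⟨hξ.1, lt_trans hξ.2 hxT⟩
      have hslope : slope r' 0 x = r'' ξ := by
        rw [slope_def_field, hξeq]
      rw [hslope, part1o ξ hξmem]
      have : dist ξ 0 < δ₁ := by
        rw [Real.dist_eq, sub_zero, abs_of_pos hξ.1]; exact lt_trans hξ.2 hxδ
      have := hδ₁' this
      rw [hr0] at this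
      rwa [hr0]
    exact tendsto_nhds_unique slope_lim lim2
  refine ⟨fun t ht => ?_, hr0, hr'0, part4⟩
  rcases eq_or_lt_of_le ht.1 with h | h
  · rw [← h]; exact hr''0
  · exact part1o t ⟨h, ht.2⟩
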